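/- Let Σ be a finite alphabet with |Σ| ≥ 2. Then for every z ∈ {h, p, r, c, rc}, the class 𝓛_{Σ,z} is closed neither under row concatenation closure nor under column concatenation closure: there exist array patterns α and α' such that (L_{Σ,z}(α))^{⊖*} ≠ L_{Σ,z}(γ) for every array pattern γ, and (L_{Σ,z}(α'))^{⦶*} ≠ L_{Σ,z}(γ) for every array pattern γ. -/

import Mathlib

/-- A nonempty rectangular two-dimensional word (array) over `σ`. -/
structure Arr (σ : Type) : Type where
  rows : ℕ
  cols : ℕ
  rows_pos : 0 < rows
  cols_pos : 0 < cols
  entry : Fin rows → Fin cols → σ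

namespace Arr

variable {σ γ : Type}

/-- Column concatenation: place `V` to the right of `U`; `none` if heights differ. -/
def colCat (U V : Arr σ) : Option (Arr σ) :=
  if h : U.rows = V.rows then
    some { rows := U.rows
           cols := U.cols + V.cols
           rows_pos := U.rows_pos
           cols_pos := by have := U.cols_pos; omega
           entry := fun i j =>
             if hj : (j : ℕ) < U.cols then U.entry i ⟨j, hj⟩
             else V.entry (Fin.cast h i) ⟨(j : ℕ) - U.cols, by have := j.isLt; omega⟩ }
  else none

/-- Row concatenation: place `V` below `U`; `none` if widths differ. -/
def rowCat (U V : Arr σ) : Option (Arr σ) :=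
  if h : U.cols = V.cols then
    some { rows := U.rows + V.rows
           cols := U.cols
           rows_pos := by have := U.rows_pos; omega
           cols_pos := U.cols_pos
           entry := fun i j =>
             if hi : (i : ℕ) < U.rows then U.entry ⟨i, hi⟩ j
             else V.entry ⟨(i : ℕ) - U.rows, by have := i.isLt; omega⟩ (Fin.cast h j) }
  else none

/-- A two-dimensional morphism: compatible with both concatenations,
with "both sides undefined" counting as equal. -/
def IsMorphism (h : Arr σ → Arr γ) : Prop :=
  (∀ V W : Arr σ, Option.map h (colCat V W) = colCat (h V) (h W)) ∧
  (∀ V W : Arr σ, Option.map h (rowCat V W) = rowCat (h V) (h W))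

/-- Concatenate a nonempty list of (possibly undefined) arrays with the
given partial concatenation operation; `none` on the empty list. -/
def catListO (op : Arr σ → Arr σ → Option (Arr σ)) : List (Option (Arr σ)) → Option (Arr σ)
  | [] => none
  | [a] => a
  | a :: b :: rest => a.bind fun x => (catListO op (b :: rest)).bind fun y => op x y

/-- `g_{⦶,⊖}`: substitute and assemble, first column-concatenating each row,
then row-concatenating the rows. -/
def subCR {X : Type} (g : X → Arr σ) (α : Arr X) : Option (Arr σ) :=
  catListO rowCat (List.ofFn fun i : Fin α.rows =>
    catListO colCat (List.ofFn fun j : Fin α.cols => some (g (α.entry i j))))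

/-- `g_{⊖,⦶}`: substitute and assemble, first row-concatenating each column,
then column-concatenating the columns. -/
def subRC {X : Type} (g : X → Arr σ) (α : Arr X) : Option (Arr σ) :=
  catListO colCat (List.ofFn fun j : Fin α.cols =>
    catListO rowCat (List.ofFn fun i : Fin α.rows => some (g (α.entry i j))))

/-- A substitution is uniform if all images have the same dimensions. -/
def Uniform {X : Type} (g : X → Arr σ) : Prop :=
  ∃ m n : ℕ, ∀ x : X, (g x).rows = m ∧ (g x).cols = n

end Arr

open Arr

/-- The five modes of array pattern languages. -/
inductive Mode | h | p | r | c | rc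
deriving DecidableEq

/-- The array pattern language of an array pattern (an array over the
variables `ℕ`) in each mode. -/
def langOf (σ : Type) : Mode → Arr ℕ → Set (Arr σ)
  | Mode.h, α => {W | ∃ g : Arr ℕ → Arr σ, IsMorphism g ∧ g α = W}
  | Mode.p, α => {W | ∃ s : ℕ → Arr σ, subCR s α = some W ∧ subRC s α = some W}
  | Mode.r, α => {W | ∃ s : ℕ → Arr σ, subCR s α = some W}
  | Mode.c, α => {W | ∃ s : ℕ → Arr σ, subRC s α = some W}
  | Mode.rc, α =>
      {W | ∃ s : ℕ → Arr σ, subCR s α = some W} ∪ {W | ∃ s : ℕ → Arr σ, subRC s α = some W}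

/-- The row concatenation closure of an array language. -/
def rowStar {σ : Type} (L : Set (Arr σ)) : Set (Arr σ) :=
  {W | ∃ l : List (Arr σ), l ≠ [] ∧ (∀ U ∈ l, U ∈ L) ∧
        catListO rowCat (l.map some) = some W}

/-- The column concatenation closure of an array language. -/
def colStar {σ : Type} (L : Set (Arr σ)) : Set (Arr σ) :=
  {W | ∃ l : List (Arr σ), l ≠ [] ∧ (∀ U ∈ l, U ∈ L) ∧
        catListO colCat (l.map some) = some W}

namespace Arr

variable {σ τ : Type}

theorem ext2 {A B : Arr σ} (hr : A.rows = B.rows) (hc : A.cols = B.cols)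
    (he : ∀ (i j : ℕ) (hi : i < A.rows) (hj : j < A.cols),
      A.entry ⟨i, hi⟩ ⟨j, hj⟩ = B.entry ⟨i, hr ▸ hi⟩ ⟨j, hc ▸ hj⟩) : A = B := by
  obtain ⟨ar, ac, h1, h2, ae⟩ := A
  obtain ⟨br, bc, h3, h4, be⟩ := B
  dsimp at hr hc he
  subst hr; subst hc
  simp only [Arr.mk.injEq, heq_eq_eq, true_and]
  funext i j
  have := he i j i.isLt j.isLt
  simpa using this

theorem entry_congr {A : Arr σ} {i i' : Fin A.rows} {j j' : Fin A.cols}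
    (hi : (i : ℕ) = i') (hj : (j : ℕ) = j') : A.entry i j = A.entry i' j' := by
  have h1 : i = i' := Fin.ext hi
  have h2 : j = j' := Fin.ext hj
  rw [h1, h2]

theorem entry_eq_of_eq {A B : Arr σ} (h : A = B) (i j : ℕ) (hi : i < A.rows)
    (hj : j < A.cols) :
    A.entry ⟨i, hi⟩ ⟨j, hj⟩ = B.entry ⟨i, h ▸ hi⟩ ⟨j, h ▸ hj⟩ := by
  subst h; rfl

theorem rowCat_dims {U V W : Arr σ} (h : rowCat U V = some W) :
    U.cols = V.cols ∧ W.rows = U.rows + V.rows ∧ W.cols = U.cols := by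
  unfold rowCat at h
  split at h
  · simp only [Option.some.injEq] at h
    subst h
    exact ⟨‹_›, rfl, rfl⟩
  · cases h

theorem colCat_dims {U V W : Arr σ} (h : colCat U V = some W) :
    U.rows = V.rows ∧ W.cols = U.cols + V.cols ∧ W.rows = U.rows := by
  unfold colCat at h
  split at h
  · simp only [Option.some.injEq] at h
    subst h
    exact ⟨‹_›, rfl, rfl⟩
  · cases h

theorem rowCat_entry_left {U V W : Arr σ} (h : rowCat U V = some W) {i j : ℕ}
    (hi : i < W.rows) (hj : j < W.cols) (hi2 : i < U.rows) (hj2 : j < U.cols) :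
    W.entry ⟨i, hi⟩ ⟨j, hj⟩ = U.entry ⟨i, hi2⟩ ⟨j, hj2⟩ := by
  unfold rowCat at h
  split at h
  · simp only [Option.some.injEq] at h
    subst h
    dsimp only
    rw [dif_pos hi2]
  · cases h

theorem rowCat_entry_right {U V W : Arr σ} (h : rowCat U V = some W) {i j : ℕ}
    (hi : i < W.rows) (hj : j < W.cols) (hi2 : U.rows ≤ i) (hi3 : i - U.rows < V.rows)
    (hj2 : j < V.cols) :
    W.entry ⟨i, hi⟩ ⟨j, hj⟩ = V.entry ⟨i - U.rows, hi3⟩ ⟨j, hj2⟩ := by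
  unfold rowCat at h
  split at h
  · simp only [Option.some.injEq] at h
    subst h
    dsimp only
    rw [dif_neg (by omega)]
    exact entry_congr rfl rfl
  · cases h

theorem colCat_entry_left {U V W : Arr σ} (h : colCat U V = some W) {i j : ℕ}
    (hi : i < W.rows) (hj : j < W.cols) (hi2 : i < U.rows) (hj2 : j < U.cols) :
    W.entry ⟨i, hi⟩ ⟨j, hj⟩ = U.entry ⟨i, hi2⟩ ⟨j, hj2⟩ := by
  unfold colCat at h
  split at h
  · simp only [Option.some.injEq] at h
    subst h
    dsimp only
    rw [dif_pos hj2]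
  · cases h

theorem colCat_entry_right {U V W : Arr σ} (h : colCat U V = some W) {i j : ℕ}
    (hi : i < W.rows) (hj : j < W.cols) (hj2 : U.cols ≤ j) (hj3 : j - U.cols < V.cols)
    (hi2 : i < V.rows) :
    W.entry ⟨i, hi⟩ ⟨j, hj⟩ = V.entry ⟨i, hi2⟩ ⟨j - U.cols, hj3⟩ := by
  unfold colCat at h
  split at h
  · simp only [Option.some.injEq] at h
    subst h
    dsimp only
    rw [dif_neg (by omega)]
    exact entry_congr rfl rfl
  · cases h

end Arr
namespace Arr

variable {σ τ : Type} {X : Type}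

theorem exists_rowSplit (A : Arr σ) (p q : ℕ) (hp : 0 < p) (hq : 0 < q)
    (hpq : A.rows = p + q) :
    ∃ B C : Arr σ, B.rows = p ∧ C.rows = q ∧ rowCat B C = some A := by
  refine ⟨⟨p, A.cols, hp, A.cols_pos, fun i j => A.entry ⟨i, by omega⟩ j⟩,
          ⟨q, A.cols, hq, A.cols_pos, fun i j => A.entry ⟨p + i, by omega⟩ j⟩,
          rfl, rfl, ?_⟩
  unfold rowCat
  rw [dif_pos rfl]
  congr 1
  refine ext2 (show p + q = A.rows by omega) rfl ?_
  intro i j hi hj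
  dsimp only
  split
  · exact entry_congr rfl rfl
  · exact entry_congr (show p + (i - p) = i by omega) rfl

theorem exists_colSplit (A : Arr σ) (p q : ℕ) (hp : 0 < p) (hq : 0 < q)
    (hpq : A.cols = p + q) :
    ∃ B C : Arr σ, B.cols = p ∧ C.cols = q ∧ colCat B C = some A := by
  refine ⟨⟨A.rows, p, A.rows_pos, hp, fun i j => A.entry i ⟨j, by omega⟩⟩,
          ⟨A.rows, q, A.rows_pos, hq, fun i j => A.entry i ⟨p + j, by omega⟩⟩,
          rfl, rfl, ?_⟩
  unfold colCat
  rw [dif_pos rfl]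
  congr 1
  refine ext2 rfl (show p + q = A.cols by omega) ?_
  intro i j hi hj
  dsimp only
  split
  · exact entry_congr rfl rfl
  · exact entry_congr rfl (show p + (j - p) = j by omega)

theorem IsMorphism.rows_le {g : Arr X → Arr σ} (hg : IsMorphism g) (A : Arr X) :
    A.rows ≤ (g A).rows := by
  generalize hn : A.rows = n
  induction n using Nat.strong_induction_on generalizing A with
  | _ n ih =>
    rcases Nat.lt_or_ge n 2 with h2 | h2
    · have := (g A).rows_pos; have := A.rows_pos; omega
    · obtain ⟨B, C, hB, hC, hcat⟩ := exists_rowSplit A 1 (n - 1) one_pos (by omega)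
        (by omega)
      have hm := hg.2 B C
      rw [hcat] at hm
      simp only [Option.map_some] at hm
      have hrc := rowCat_dims hm.symm
      have h1 : 1 ≤ (g B).rows := (g B).rows_pos
      have h3 : n - 1 ≤ (g C).rows := ih (n - 1) (by omega) C hC
      omega

theorem IsMorphism.cols_le {g : Arr X → Arr σ} (hg : IsMorphism g) (A : Arr X) :
    A.cols ≤ (g A).cols := by
  generalize hn : A.cols = n
  induction n using Nat.strong_induction_on generalizing A with
  | _ n ih =>
    rcases Nat.lt_or_ge n 2 with h2 | h2
    · have := (g A).cols_pos; have := A.cols_pos; omega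
    · obtain ⟨B, C, hB, hC, hcat⟩ := exists_colSplit A 1 (n - 1) one_pos (by omega)
        (by omega)
      have hm := hg.1 B C
      rw [hcat] at hm
      simp only [Option.map_some] at hm
      have hrc := colCat_dims hm.symm
      have h1 : 1 ≤ (g B).cols := (g B).cols_pos
      have h3 : n - 1 ≤ (g C).cols := ih (n - 1) (by omega) C hC
      omega

/-- chain lemma for rowCat over lists of `some`s -/
theorem catList_rowCat {l : List (Arr σ)} {W : Arr σ}
    (h : catListO rowCat (l.map some) = some W) :
    W.rows = (l.map Arr.rows).sum ∧ ∀ U ∈ l, U.cols = W.cols := by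
  induction l generalizing W with
  | nil => simp [catListO] at h
  | cons a t ih =>
    cases t with
    | nil =>
      simp only [List.map_cons, List.map_nil, catListO] at h
      simp only [Option.some.injEq] at h
      subst h
      simp
    | cons b r =>
      simp only [List.map_cons, catListO, Option.bind_some] at h
      rw [Option.bind_eq_some_iff] at h
      obtain ⟨Y, hY, hcat⟩ := h
      have ihY := ih (by simpa [catListO] using hY)
      have hd := rowCat_dims hcat
      refine ⟨?_, ?_⟩
      · simp only [List.map_cons, List.sum_cons] at ihY ⊢
        omega
      · intro U hU
        rcases List.mem_cons.mp hU with h | h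
        · subst h; omega
        · have := ihY.2 U h
          omega

theorem catList_colCat {l : List (Arr σ)} {W : Arr σ}
    (h : catListO colCat (l.map some) = some W) :
    W.cols = (l.map Arr.cols).sum ∧ ∀ U ∈ l, U.rows = W.rows := by
  induction l generalizing W with
  | nil => simp [catListO] at h
  | cons a t ih =>
    cases t with
    | nil =>
      simp only [List.map_cons, List.map_nil, catListO] at h
      simp only [Option.some.injEq] at h
      subst h
      simp
    | cons b r =>
      simp only [List.map_cons, catListO, Option.bind_some] at h
      rw [Option.bind_eq_some_iff] at h
      obtain ⟨Y, hY, hcat⟩ := h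
      have ihY := ih (by simpa [catListO] using hY)
      have hd := colCat_dims hcat
      refine ⟨?_, ?_⟩
      · simp only [List.map_cons, List.sum_cons] at ihY ⊢
        omega
      · intro U hU
        rcases List.mem_cons.mp hU with h | h
        · subst h; omega
        · have := ihY.2 U h
          omega

/-- extract the underlying list of arrays from a defined chain -/
theorem catList_rowCat_options {L : List (Option (Arr σ))} {W : Arr σ}
    (h : catListO rowCat L = some W) :
    ∃ l : List (Arr σ), L = l.map some := by
  induction L generalizing W with
  | nil => simp [catListO] at h
  | cons a t ih =>
    cases t with
    | nil =>
      exact ⟨[W], by simp [catListO] at h; simp [h]⟩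
    | cons b r =>
      simp only [catListO] at h
      rw [Option.bind_eq_some_iff] at h
      obtain ⟨x, hx, h⟩ := h
      rw [Option.bind_eq_some_iff] at h
      obtain ⟨Y, hY, hcat⟩ := h
      obtain ⟨l, hl⟩ := ih (W := Y) (by simpa [catListO] using hY)
      exact ⟨x :: l, by simp [hx, hl]⟩

theorem catList_colCat_options {L : List (Option (Arr σ))} {W : Arr σ}
    (h : catListO colCat L = some W) :
    ∃ l : List (Arr σ), L = l.map some := by
  induction L generalizing W with
  | nil => simp [catListO] at h
  | cons a t ih =>
    cases t with
    | nil =>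
      exact ⟨[W], by simp [catListO] at h; simp [h]⟩
    | cons b r =>
      simp only [catListO] at h
      rw [Option.bind_eq_some_iff] at h
      obtain ⟨x, hx, h⟩ := h
      rw [Option.bind_eq_some_iff] at h
      obtain ⟨Y, hY, hcat⟩ := h
      obtain ⟨l, hl⟩ := ih (W := Y) (by simpa [catListO] using hY)
      exact ⟨x :: l, by simp [hx, hl]⟩

end Arr
namespace Arr

variable {σ τ : Type} {X : Type}

/-- 1×1 array -/
def unit (x : σ) : Arr σ := ⟨1, 1, one_pos, one_pos, fun _ _ => x⟩

/-- constant array -/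
def constA (a : σ) (m n : ℕ) (hm : 0 < m) (hn : 0 < n) : Arr σ :=
  ⟨m, n, hm, hn, fun _ _ => a⟩

/-- entrywise relabelling -/
def relabel (c : σ → τ) (A : Arr σ) : Arr τ :=
  ⟨A.rows, A.cols, A.rows_pos, A.cols_pos, fun i j => c (A.entry i j)⟩

theorem isMorphism_relabel (c : σ → τ) : IsMorphism (relabel c) := by
  constructor
  · intro V W
    unfold colCat relabel
    dsimp only
    split
    · simp only [Option.map_some, Option.some.injEq]
      refine ext2 rfl rfl ?_
      intro i j hi hj
      dsimp only
      split <;> rfl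
    · rfl
  · intro V W
    unfold rowCat relabel
    dsimp only
    split
    · simp only [Option.map_some, Option.some.injEq]
      refine ext2 rfl rfl ?_
      intro i j hi hj
      dsimp only
      split <;> rfl
    · rfl

/-- `subCR` on a 2×1 pattern -/
theorem subCR_two_one {γ : Arr X} (h2 : γ.rows = 2) (h1 : γ.cols = 1) (s : X → Arr σ) :
    subCR s γ = rowCat (s (γ.entry ⟨0, by omega⟩ ⟨0, by omega⟩))
      (s (γ.entry ⟨1, by omega⟩ ⟨0, by omega⟩)) := by
  obtain ⟨r, c, hr, hc, e⟩ := γ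
  dsimp only at h2 h1 ⊢
  subst h2; subst h1
  show catListO rowCat (List.ofFn fun i : Fin 2 =>
    catListO colCat (List.ofFn fun j : Fin 1 => some (s (e i j)))) = _
  simp only [List.ofFn_succ, List.ofFn_zero, catListO, Option.bind_some]
  rfl

/-- `subRC` on a 2×1 pattern -/
theorem subRC_two_one {γ : Arr X} (h2 : γ.rows = 2) (h1 : γ.cols = 1) (s : X → Arr σ) :
    subRC s γ = rowCat (s (γ.entry ⟨0, by omega⟩ ⟨0, by omega⟩))
      (s (γ.entry ⟨1, by omega⟩ ⟨0, by omega⟩)) := by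
  obtain ⟨r, c, hr, hc, e⟩ := γ
  dsimp only at h2 h1 ⊢
  subst h2; subst h1
  show catListO colCat (List.ofFn fun j : Fin 1 =>
    catListO rowCat (List.ofFn fun i : Fin 2 => some (s (e i j)))) = _
  simp only [List.ofFn_succ, List.ofFn_zero, catListO, Option.bind_some]
  rfl

/-- `subCR` on a 1×2 pattern -/
theorem subCR_one_two {γ : Arr X} (h2 : γ.rows = 1) (h1 : γ.cols = 2) (s : X → Arr σ) :
    subCR s γ = colCat (s (γ.entry ⟨0, by omega⟩ ⟨0, by omega⟩))
      (s (γ.entry ⟨0, by omega⟩ ⟨1, by omega⟩)) := by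
  obtain ⟨r, c, hr, hc, e⟩ := γ
  dsimp only at h2 h1 ⊢
  subst h2; subst h1
  show catListO rowCat (List.ofFn fun i : Fin 1 =>
    catListO colCat (List.ofFn fun j : Fin 2 => some (s (e i j)))) = _
  simp only [List.ofFn_succ, List.ofFn_zero, catListO, Option.bind_some]
  rfl

/-- `subRC` on a 1×2 pattern -/
theorem subRC_one_two {γ : Arr X} (h2 : γ.rows = 1) (h1 : γ.cols = 2) (s : X → Arr σ) :
    subRC s γ = colCat (s (γ.entry ⟨0, by omega⟩ ⟨0, by omega⟩))
      (s (γ.entry ⟨0, by omega⟩ ⟨1, by omega⟩)) := by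
  obtain ⟨r, c, hr, hc, e⟩ := γ
  dsimp only at h2 h1 ⊢
  subst h2; subst h1
  show catListO colCat (List.ofFn fun j : Fin 2 =>
    catListO rowCat (List.ofFn fun i : Fin 1 => some (s (e i j)))) = _
  simp only [List.ofFn_succ, List.ofFn_zero, catListO, Option.bind_some]
  rfl

end Arr
namespace Arr

variable {σ τ : Type} {X : Type}

theorem catListO_cons (op : Arr σ → Arr σ → Option (Arr σ)) (x : Option (Arr σ))
    (L : List (Option (Arr σ))) (h : L ≠ []) :
    catListO op (x :: L) = x.bind fun a => (catListO op L).bind fun b => op a b := by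
  cases L with
  | nil => exact absurd rfl h
  | cons y t => rfl

theorem repCol (a : σ) (n : ℕ) (hn : 0 < n) :
    catListO colCat (List.replicate n (some (unit a))) =
      some (constA a 1 n one_pos hn) := by
  induction n with
  | zero => omega
  | succ m ih =>
    cases m with
    | zero =>
      show some (unit a) = _
      rw [Option.some.injEq]
      exact ext2 rfl rfl (fun i j hi hj => rfl)
    | succ k =>
      rw [List.replicate_succ, catListO_cons _ _ _ (by simp), ih (by omega)]
      simp only [Option.bind_some]
      unfold colCat
      dsimp only [unit, constA]
      simp only [↓reduceDIte, Option.some.injEq]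
      refine ext2 rfl (show 1 + (k + 1) = k + 1 + 1 by omega) ?_
      intro i j hi hj
      dsimp only
      exact dite_eq_ite.trans (ite_self _)

theorem repRowC (a : σ) (m n : ℕ) (hm : 0 < m) (hn : 0 < n) :
    catListO rowCat (List.replicate m (some (constA a 1 n one_pos hn))) =
      some (constA a m n hm hn) := by
  induction m with
  | zero => omega
  | succ p ih =>
    cases p with
    | zero =>
      exact congrArg some (ext2 rfl rfl (fun i j hi hj => rfl))
    | succ k =>
      rw [List.replicate_succ, catListO_cons _ _ _ (by simp), ih (by omega)]
      simp only [Option.bind_some]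
      unfold rowCat
      dsimp only [constA]
      simp only [↓reduceDIte, Option.some.injEq]
      refine ext2 (show 1 + (k + 1) = k + 1 + 1 by omega) rfl ?_
      intro i j hi hj
      dsimp only
      exact dite_eq_ite.trans (ite_self _)

theorem repRow (a : σ) (m : ℕ) (hm : 0 < m) :
    catListO rowCat (List.replicate m (some (unit a))) =
      some (constA a m 1 hm one_pos) := by
  induction m with
  | zero => omega
  | succ p ih =>
    cases p with
    | zero =>
      show some (unit a) = _
      rw [Option.some.injEq]
      exact ext2 rfl rfl (fun i j hi hj => rfl)
    | succ k =>
      rw [List.replicate_succ, catListO_cons _ _ _ (by simp), ih (by omega)]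
      simp only [Option.bind_some]
      unfold rowCat
      dsimp only [unit, constA]
      simp only [↓reduceDIte, Option.some.injEq]
      refine ext2 (show 1 + (k + 1) = k + 1 + 1 by omega) rfl ?_
      intro i j hi hj
      dsimp only
      exact dite_eq_ite.trans (ite_self _)

theorem repColC (a : σ) (m n : ℕ) (hm : 0 < m) (hn : 0 < n) :
    catListO colCat (List.replicate n (some (constA a m 1 hm one_pos))) =
      some (constA a m n hm hn) := by
  induction n with
  | zero => omega
  | succ p ih =>
    cases p with
    | zero =>
      exact congrArg some (ext2 rfl rfl (fun i j hi hj => rfl))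
    | succ k =>
      rw [List.replicate_succ, catListO_cons _ _ _ (by simp), ih (by omega)]
      simp only [Option.bind_some]
      unfold colCat
      dsimp only [constA]
      simp only [↓reduceDIte, Option.some.injEq]
      refine ext2 rfl (show 1 + (k + 1) = k + 1 + 1 by omega) ?_
      intro i j hi hj
      dsimp only
      exact dite_eq_ite.trans (ite_self _)

theorem subCR_const (a : σ) (γ : Arr X) :
    subCR (fun _ => unit a) γ =
      some (constA a γ.rows γ.cols γ.rows_pos γ.cols_pos) := by
  unfold subCR
  simp only [List.ofFn_const, repCol a γ.cols γ.cols_pos,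
    repRowC a γ.rows γ.cols γ.rows_pos γ.cols_pos]

theorem subRC_const (a : σ) (γ : Arr X) :
    subRC (fun _ => unit a) γ =
      some (constA a γ.rows γ.cols γ.rows_pos γ.cols_pos) := by
  unfold subRC
  simp only [List.ofFn_const, repRow a γ.rows γ.rows_pos,
    repColC a γ.rows γ.cols γ.rows_pos γ.cols_pos]

end Arr
namespace Arr

variable {σ τ : Type} {X : Type}

theorem chainRow {L : List (Option (Arr σ))} {W : Arr σ}
    (h : catListO rowCat L = some W) :
    L.length ≤ W.rows ∧ ∀ o ∈ L, ∃ U, o = some U ∧ U.cols = W.cols := by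
  induction L generalizing W with
  | nil => simp [catListO] at h
  | cons a t ih =>
    cases t with
    | nil =>
      refine ⟨W.rows_pos, ?_⟩
      intro o ho
      simp only [List.mem_singleton] at ho
      subst ho
      exact ⟨W, h, rfl⟩
    | cons b r =>
      simp only [catListO] at h
      rw [Option.bind_eq_some_iff] at h
      obtain ⟨x, hx, h⟩ := h
      rw [Option.bind_eq_some_iff] at h
      obtain ⟨Y, hY, hcat⟩ := h
      obtain ⟨hlen, hmem⟩ := ih (W := Y) (by simpa [catListO] using hY)
      have hd := rowCat_dims hcat
      constructor
      · have := x.rows_pos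
        simp only [List.length_cons] at hlen ⊢
        omega
      · intro o ho
        rcases List.mem_cons.mp ho with h | h
        · subst h; exact ⟨x, hx, by omega⟩
        · obtain ⟨U, hU1, hU2⟩ := hmem o h
          exact ⟨U, hU1, by omega⟩

theorem chainCol {L : List (Option (Arr σ))} {W : Arr σ}
    (h : catListO colCat L = some W) :
    L.length ≤ W.cols ∧ ∀ o ∈ L, ∃ U, o = some U ∧ U.rows = W.rows := by
  induction L generalizing W with
  | nil => simp [catListO] at h
  | cons a t ih =>
    cases t with
    | nil =>
      refine ⟨W.cols_pos, ?_⟩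
      intro o ho
      simp only [List.mem_singleton] at ho
      subst ho
      exact ⟨W, h, rfl⟩
    | cons b r =>
      simp only [catListO] at h
      rw [Option.bind_eq_some_iff] at h
      obtain ⟨x, hx, h⟩ := h
      rw [Option.bind_eq_some_iff] at h
      obtain ⟨Y, hY, hcat⟩ := h
      obtain ⟨hlen, hmem⟩ := ih (W := Y) (by simpa [catListO] using hY)
      have hd := colCat_dims hcat
      constructor
      · have := x.cols_pos
        simp only [List.length_cons] at hlen ⊢
        omega
      · intro o ho
        rcases List.mem_cons.mp ho with h | h
        · subst h; exact ⟨x, hx, by omega⟩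
        · obtain ⟨U, hU1, hU2⟩ := hmem o h
          exact ⟨U, hU1, by omega⟩

theorem subCR_dims {s : X → Arr σ} {γ : Arr X} {W : Arr σ}
    (h : subCR s γ = some W) : γ.rows ≤ W.rows ∧ γ.cols ≤ W.cols := by
  unfold subCR at h
  have hc := chainRow h
  refine ⟨by simpa using hc.1, ?_⟩
  obtain ⟨U, hU, hUc⟩ := hc.2 _ (List.mem_ofFn.2 ⟨⟨0, γ.rows_pos⟩, rfl⟩)
  have hcc := chainCol hU
  have : γ.cols ≤ U.cols := by simpa using hcc.1
  omega

theorem subRC_dims {s : X → Arr σ} {γ : Arr X} {W : Arr σ}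
    (h : subRC s γ = some W) : γ.rows ≤ W.rows ∧ γ.cols ≤ W.cols := by
  unfold subRC at h
  have hc := chainCol h
  refine ⟨?_, by simpa using hc.1⟩
  obtain ⟨U, hU, hUc⟩ := hc.2 _ (List.mem_ofFn.2 ⟨⟨0, γ.cols_pos⟩, rfl⟩)
  have hcc := chainRow hU
  have : γ.rows ≤ U.rows := by simpa using hcc.1
  omega

end Arr

theorem langOf_dims {σ : Type} (z : Mode) (γ : Arr ℕ) (W : Arr σ)
    (h : W ∈ langOf σ z γ) : γ.rows ≤ W.rows ∧ γ.cols ≤ W.cols := by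
  cases z with
  | h =>
    obtain ⟨g, hg, rfl⟩ := h
    exact ⟨hg.rows_le γ, hg.cols_le γ⟩
  | p =>
    obtain ⟨s, h1, h2⟩ := h
    exact Arr.subCR_dims h1
  | r =>
    obtain ⟨s, h1⟩ := h
    exact Arr.subCR_dims h1
  | c =>
    obtain ⟨s, h1⟩ := h
    exact Arr.subRC_dims h1
  | rc =>
    rcases h with ⟨s, h1⟩ | ⟨s, h1⟩
    · exact Arr.subCR_dims h1
    · exact Arr.subRC_dims h1

theorem const_mem {σ : Type} (z : Mode) (γ : Arr ℕ) (a : σ) :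
    Arr.constA a γ.rows γ.cols γ.rows_pos γ.cols_pos ∈ langOf σ z γ := by
  have hrel : Arr.relabel (fun _ => a) γ =
      Arr.constA a γ.rows γ.cols γ.rows_pos γ.cols_pos :=
    Arr.ext2 rfl rfl (fun i j hi hj => rfl)
  cases z with
  | h => exact ⟨Arr.relabel (fun _ => a), Arr.isMorphism_relabel _, hrel⟩
  | p => exact ⟨fun _ => Arr.unit a, Arr.subCR_const a γ, Arr.subRC_const a γ⟩
  | r => exact ⟨fun _ => Arr.unit a, Arr.subCR_const a γ⟩
  | c => exact ⟨fun _ => Arr.unit a, Arr.subRC_const a γ⟩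
  | rc => exact Or.inl ⟨fun _ => Arr.unit a, Arr.subCR_const a γ⟩
namespace Arr

variable {σ : Type} {X : Type}

theorem two_one_eq_rowCat_units {γ : Arr X} (h2 : γ.rows = 2) (h1 : γ.cols = 1) :
    rowCat (unit (γ.entry ⟨0, by omega⟩ ⟨0, by omega⟩))
      (unit (γ.entry ⟨1, by omega⟩ ⟨0, by omega⟩)) = some γ := by
  unfold rowCat unit
  dsimp only
  rw [dif_pos rfl, Option.some.injEq]
  refine ext2 (show 1 + 1 = γ.rows by omega) (show 1 = γ.cols by omega) ?_
  intro i j hi hj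
  have hi' : i < 1 + 1 := hi
  have hj' : j < 1 := hj
  dsimp only
  split
  · exact entry_congr (show (0 : ℕ) = i by omega) (show (0 : ℕ) = j by omega)
  · exact entry_congr (show (1 : ℕ) = i by omega) (show (0 : ℕ) = j by omega)

theorem one_two_eq_colCat_units {γ : Arr X} (h2 : γ.rows = 1) (h1 : γ.cols = 2) :
    colCat (unit (γ.entry ⟨0, by omega⟩ ⟨0, by omega⟩))
      (unit (γ.entry ⟨0, by omega⟩ ⟨1, by omega⟩)) = some γ := by
  unfold colCat unit
  dsimp only
  rw [dif_pos rfl, Option.some.injEq]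
  refine ext2 (show 1 = γ.rows by omega) (show 1 + 1 = γ.cols by omega) ?_
  intro i j hi hj
  have hi' : i < 1 := hi
  have hj' : j < 1 + 1 := hj
  dsimp only
  split
  · exact entry_congr (show (0 : ℕ) = i by omega) (show (0 : ℕ) = j by omega)
  · exact entry_congr (show (0 : ℕ) = i by omega) (show (1 : ℕ) = j by omega)

/-- the 2×1 array with entries a (top) and b (bottom) -/
def vab (a b : σ) : Arr σ :=
  ⟨2, 1, by omega, one_pos, fun i _ => if (i : ℕ) < 1 then a else b⟩

/-- the 1×2 array with entries a (left) and b (right) -/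
def hab (a b : σ) : Arr σ :=
  ⟨1, 2, one_pos, by omega, fun _ j => if (j : ℕ) < 1 then a else b⟩

theorem rowCat_unit_unit (a b : σ) : rowCat (unit a) (unit b) = some (vab a b) := by
  unfold rowCat unit
  dsimp only
  rw [dif_pos rfl, Option.some.injEq]
  refine ext2 rfl rfl ?_
  intro i j hi hj
  dsimp only [vab]
  split <;> rfl

theorem colCat_unit_unit (a b : σ) : colCat (unit a) (unit b) = some (hab a b) := by
  unfold colCat unit
  dsimp only
  rw [dif_pos rfl, Option.some.injEq]
  refine ext2 rfl rfl ?_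
  intro i j hi hj
  dsimp only [hab]
  split <;> rfl

end Arr

open Arr

theorem mem_two_one_same {σ : Type} (z : Mode) (γ : Arr ℕ)
    (h2 : γ.rows = 2) (h1 : γ.cols = 1)
    (hyz : γ.entry ⟨0, by omega⟩ ⟨0, by omega⟩ = γ.entry ⟨1, by omega⟩ ⟨0, by omega⟩)
    (W : Arr σ) (h : W ∈ langOf σ z γ) : ∃ U, rowCat U U = some W := by
  have key : ∀ s : ℕ → Arr σ, subCR s γ = some W →
      ∃ U, rowCat U U = some W := by
    intro s hs
    rw [subCR_two_one h2 h1, ← hyz] at hs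
    exact ⟨_, hs⟩
  have key' : ∀ s : ℕ → Arr σ, subRC s γ = some W →
      ∃ U, rowCat U U = some W := by
    intro s hs
    rw [subRC_two_one h2 h1, ← hyz] at hs
    exact ⟨_, hs⟩
  cases z with
  | h =>
    obtain ⟨g, hg, rfl⟩ := h
    have hu := two_one_eq_rowCat_units h2 h1
    rw [← hyz] at hu
    have := hg.2 (unit (γ.entry ⟨0, by omega⟩ ⟨0, by omega⟩))
      (unit (γ.entry ⟨0, by omega⟩ ⟨0, by omega⟩))
    rw [hu] at this
    simp only [Option.map_some] at this
    exact ⟨_, this.symm⟩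
  | p => obtain ⟨s, hs, _⟩ := h; exact key s hs
  | r => obtain ⟨s, hs⟩ := h; exact key s hs
  | c => obtain ⟨s, hs⟩ := h; exact key' s hs
  | rc =>
    rcases h with ⟨s, hs⟩ | ⟨s, hs⟩
    · exact key s hs
    · exact key' s hs

theorem mem_one_two_same {σ : Type} (z : Mode) (γ : Arr ℕ)
    (h2 : γ.rows = 1) (h1 : γ.cols = 2)
    (hyz : γ.entry ⟨0, by omega⟩ ⟨0, by omega⟩ = γ.entry ⟨0, by omega⟩ ⟨1, by omega⟩)
    (W : Arr σ) (h : W ∈ langOf σ z γ) : ∃ U, colCat U U = some W := by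
  have key : ∀ s : ℕ → Arr σ, subCR s γ = some W →
      ∃ U, colCat U U = some W := by
    intro s hs
    rw [subCR_one_two h2 h1, ← hyz] at hs
    exact ⟨_, hs⟩
  have key' : ∀ s : ℕ → Arr σ, subRC s γ = some W →
      ∃ U, colCat U U = some W := by
    intro s hs
    rw [subRC_one_two h2 h1, ← hyz] at hs
    exact ⟨_, hs⟩
  cases z with
  | h =>
    obtain ⟨g, hg, rfl⟩ := h
    have hu := one_two_eq_colCat_units h2 h1
    rw [← hyz] at hu
    have := hg.1 (unit (γ.entry ⟨0, by omega⟩ ⟨0, by omega⟩))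
      (unit (γ.entry ⟨0, by omega⟩ ⟨0, by omega⟩))
    rw [hu] at this
    simp only [Option.map_some] at this
    exact ⟨_, this.symm⟩
  | p => obtain ⟨s, hs, _⟩ := h; exact key s hs
  | r => obtain ⟨s, hs⟩ := h; exact key s hs
  | c => obtain ⟨s, hs⟩ := h; exact key' s hs
  | rc =>
    rcases h with ⟨s, hs⟩ | ⟨s, hs⟩
    · exact key s hs
    · exact key' s hs

theorem vab_mem {σ : Type} (z : Mode) (γ : Arr ℕ)
    (h2 : γ.rows = 2) (h1 : γ.cols = 1) (a b : σ)
    (hyz : γ.entry ⟨0, by omega⟩ ⟨0, by omega⟩ ≠ γ.entry ⟨1, by omega⟩ ⟨0, by omega⟩) :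
    vab a b ∈ langOf σ z γ := by
  set y := γ.entry ⟨0, by omega⟩ ⟨0, by omega⟩ with hy
  set w := γ.entry ⟨1, by omega⟩ ⟨0, by omega⟩ with hw
  have hne : w ≠ y := fun hh => hyz hh.symm
  have hs1 : subCR (fun k => if k = y then unit a else unit b) γ = some (vab a b) := by
    rw [subCR_two_one h2 h1, ← hy, ← hw, if_pos rfl, if_neg hne]
    exact rowCat_unit_unit a b
  have hs2 : subRC (fun k => if k = y then unit a else unit b) γ = some (vab a b) := by
    rw [subRC_two_one h2 h1, ← hy, ← hw, if_pos rfl, if_neg hne]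
    exact rowCat_unit_unit a b
  have hrel : relabel (fun k => if k = y then a else b) γ = vab a b := by
    refine ext2 h2 h1 ?_
    intro i j hi hj
    have hi' : i < γ.rows := hi
    have hj' : j < γ.cols := hj
    dsimp only [relabel, vab]
    rcases Nat.lt_or_ge i 1 with hc | hc
    · rw [if_pos hc]
      have : γ.entry ⟨i, hi⟩ ⟨j, hj⟩ = y := by
        rw [hy]; exact entry_congr (show i = 0 by omega) (show j = 0 by omega)
      rw [this, if_pos rfl]
    · rw [if_neg (show ¬ i < 1 by omega)]
      have : γ.entry ⟨i, hi⟩ ⟨j, hj⟩ = w := by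
        rw [hw]; exact entry_congr (show i = 1 by omega) (show j = 0 by omega)
      rw [this, if_neg hne]
  cases z with
  | h => exact ⟨relabel (fun k => if k = y then a else b), isMorphism_relabel _, hrel⟩
  | p => exact ⟨_, hs1, hs2⟩
  | r => exact ⟨_, hs1⟩
  | c => exact ⟨_, hs2⟩
  | rc => exact Or.inl ⟨_, hs1⟩

theorem hab_mem {σ : Type} (z : Mode) (γ : Arr ℕ)
    (h2 : γ.rows = 1) (h1 : γ.cols = 2) (a b : σ)
    (hyz : γ.entry ⟨0, by omega⟩ ⟨0, by omega⟩ ≠ γ.entry ⟨0, by omega⟩ ⟨1, by omega⟩) :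
    hab a b ∈ langOf σ z γ := by
  set y := γ.entry ⟨0, by omega⟩ ⟨0, by omega⟩ with hy
  set w := γ.entry ⟨0, by omega⟩ ⟨1, by omega⟩ with hw
  have hne : w ≠ y := fun hh => hyz hh.symm
  have hs1 : subCR (fun k => if k = y then unit a else unit b) γ = some (hab a b) := by
    rw [subCR_one_two h2 h1, ← hy, ← hw, if_pos rfl, if_neg hne]
    exact colCat_unit_unit a b
  have hs2 : subRC (fun k => if k = y then unit a else unit b) γ = some (hab a b) := by
    rw [subRC_one_two h2 h1, ← hy, ← hw, if_pos rfl, if_neg hne]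
    exact colCat_unit_unit a b
  have hrel : relabel (fun k => if k = y then a else b) γ = hab a b := by
    refine ext2 h2 h1 ?_
    intro i j hi hj
    have hi' : i < γ.rows := hi
    have hj' : j < γ.cols := hj
    dsimp only [relabel, hab]
    rcases Nat.lt_or_ge j 1 with hc | hc
    · rw [if_pos hc]
      have : γ.entry ⟨i, hi⟩ ⟨j, hj⟩ = y := by
        rw [hy]; exact entry_congr (show i = 0 by omega) (show j = 0 by omega)
      rw [this, if_pos rfl]
    · rw [if_neg (show ¬ j < 1 by omega)]
      have : γ.entry ⟨i, hi⟩ ⟨j, hj⟩ = w := by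
        rw [hw]; exact entry_congr (show i = 0 by omega) (show j = 1 by omega)
      rw [this, if_neg hne]
  cases z with
  | h => exact ⟨relabel (fun k => if k = y then a else b), isMorphism_relabel _, hrel⟩
  | p => exact ⟨_, hs1, hs2⟩
  | r => exact ⟨_, hs1⟩
  | c => exact ⟨_, hs2⟩
  | rc => exact Or.inl ⟨_, hs1⟩
open Arr

theorem even_list_sum {l : List ℕ} (h : ∀ x ∈ l, Even x) : Even l.sum := by
  induction l with
  | nil => simp
  | cons a t ih =>
    rw [List.sum_cons]
    exact (h a (List.mem_cons_self)).add (ih fun x hx => h x (List.mem_cons_of_mem _ hx))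

/-- the vertical pattern x;x -/
def vpat : Arr ℕ := ⟨2, 1, by omega, one_pos, fun _ _ => 0⟩

/-- the horizontal pattern x x -/
def hpat : Arr ℕ := ⟨1, 2, one_pos, by omega, fun _ _ => 0⟩

/-- 4×1 array a,a,b,b -/
def v4 {σ : Type} (a b : σ) : Arr σ :=
  ⟨4, 1, by omega, one_pos, fun i _ => if (i : ℕ) < 2 then a else b⟩

/-- 1×4 array a,a,b,b -/
def h4 {σ : Type} (a b : σ) : Arr σ :=
  ⟨1, 4, one_pos, by omega, fun _ j => if (j : ℕ) < 2 then a else b⟩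

theorem rowCat_const2 {σ : Type} (a b : σ) :
    rowCat (constA a 2 1 (by omega) one_pos) (constA b 2 1 (by omega) one_pos) =
      some (v4 a b) := by
  unfold rowCat constA
  dsimp only
  rw [dif_pos rfl, Option.some.injEq]
  refine ext2 rfl rfl ?_
  intro i j hi hj
  dsimp only [v4]
  split <;> rfl

theorem colCat_const2 {σ : Type} (a b : σ) :
    colCat (constA a 1 2 one_pos (by omega)) (constA b 1 2 one_pos (by omega)) =
      some (h4 a b) := by
  unfold colCat constA
  dsimp only
  rw [dif_pos rfl, Option.some.injEq]
  refine ext2 rfl rfl ?_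
  intro i j hi hj
  dsimp only [h4]
  split <;> rfl

theorem rowStar_vpat_struct {σ : Type} {z : Mode} {W : Arr σ}
    (hW : W ∈ rowStar (langOf σ z vpat)) :
    Even W.rows ∧ (W.rows = 2 → ∃ U, rowCat U U = some W) := by
  obtain ⟨l, hne, hmem, hcat⟩ := hW
  have hc := Arr.catList_rowCat hcat
  have hall : ∀ U ∈ l, Even U.rows ∧ 2 ≤ U.rows := by
    intro U hU
    obtain ⟨V, hV⟩ := mem_two_one_same z vpat rfl rfl rfl U (hmem U hU)
    have hd := Arr.rowCat_dims hV
    have := V.rows_pos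
    exact ⟨⟨V.rows, by omega⟩, by omega⟩
  constructor
  · rw [hc.1]
    apply even_list_sum
    intro x hx
    simp only [List.mem_map] at hx
    obtain ⟨U, hU, rfl⟩ := hx
    exact (hall U hU).1
  · intro h2
    cases l with
    | nil => exact absurd rfl hne
    | cons u t =>
      cases t with
      | nil =>
        have hu : some u = some W := hcat
        rw [Option.some.injEq] at hu
        subst hu
        exact mem_two_one_same z vpat rfl rfl rfl u (hmem u (List.mem_cons_self))
      | cons v r =>
        exfalso
        have h1 := (hall u (by simp)).2
        have h2' := (hall v (by simp)).2
        have hs : W.rows = u.rows + (v.rows + ((r.map Arr.rows).sum)) := by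
          rw [hc.1]; simp [List.sum_cons]
        omega

theorem colStar_hpat_struct {σ : Type} {z : Mode} {W : Arr σ}
    (hW : W ∈ colStar (langOf σ z hpat)) :
    Even W.cols ∧ (W.cols = 2 → ∃ U, colCat U U = some W) := by
  obtain ⟨l, hne, hmem, hcat⟩ := hW
  have hc := Arr.catList_colCat hcat
  have hall : ∀ U ∈ l, Even U.cols ∧ 2 ≤ U.cols := by
    intro U hU
    obtain ⟨V, hV⟩ := mem_one_two_same z hpat rfl rfl rfl U (hmem U hU)
    have hd := Arr.colCat_dims hV
    have := V.cols_pos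
    exact ⟨⟨V.cols, by omega⟩, by omega⟩
  constructor
  · rw [hc.1]
    apply even_list_sum
    intro x hx
    simp only [List.mem_map] at hx
    obtain ⟨U, hU, rfl⟩ := hx
    exact (hall U hU).1
  · intro h2
    cases l with
    | nil => exact absurd rfl hne
    | cons u t =>
      cases t with
      | nil =>
        have hu : some u = some W := hcat
        rw [Option.some.injEq] at hu
        subst hu
        exact mem_one_two_same z hpat rfl rfl rfl u (hmem u (List.mem_cons_self))
      | cons v r =>
        exfalso
        have h1 := (hall u (by simp)).2
        have h2' := (hall v (by simp)).2
        have hs : W.cols = u.cols + (v.cols + ((r.map Arr.cols).sum)) := by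
          rw [hc.1]; simp [List.sum_cons]
        omega
theorem row_half {σ : Type} (a b : σ) (hab : a ≠ b) (z : Mode) (γ : Arr ℕ) :
    rowStar (langOf σ z vpat) ≠ langOf σ z γ := by
  intro heq
  have hVaL : constA a vpat.rows vpat.cols vpat.rows_pos vpat.cols_pos ∈ langOf σ z vpat :=
    const_mem z vpat a
  have hVaM : constA a vpat.rows vpat.cols vpat.rows_pos vpat.cols_pos ∈
      rowStar (langOf σ z vpat) := by
    refine ⟨[_], by simp, ?_, rfl⟩
    intro U hU
    simp only [List.mem_singleton] at hU
    subst hU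
    exact hVaL
  have hVaγ := (Set.ext_iff.mp heq _).mp hVaM
  have hd := langOf_dims z γ _ hVaγ
  have hVr : (constA a vpat.rows vpat.cols vpat.rows_pos vpat.cols_pos).rows = 2 := rfl
  have hVc : (constA a vpat.rows vpat.cols vpat.rows_pos vpat.cols_pos).cols = 1 := rfl
  have hc1 : γ.cols = 1 := by have := γ.cols_pos; omega
  have hγr2 : γ.rows ≤ 2 := by omega
  have hcγ : constA a γ.rows γ.cols γ.rows_pos γ.cols_pos ∈ langOf σ z γ := const_mem z γ a
  have hcM := (Set.ext_iff.mp heq _).mpr hcγ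
  have heven : Even γ.rows := by
    have h := (rowStar_vpat_struct hcM).1
    exact h
  have hr2 : γ.rows = 2 := by
    obtain ⟨k, hk⟩ := heven
    have := γ.rows_pos
    omega
  by_cases hyz : γ.entry ⟨0, by omega⟩ ⟨0, by omega⟩ = γ.entry ⟨1, by omega⟩ ⟨0, by omega⟩
  · -- both pattern variables of γ coincide: v4 is in the star but not in L(γ)
    have h4M : v4 a b ∈ rowStar (langOf σ z vpat) := by
      refine ⟨[constA a 2 1 (by omega) one_pos, constA b 2 1 (by omega) one_pos],
        by simp, ?_, ?_⟩
      · intro U hU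
        simp only [List.mem_cons, List.mem_singleton, List.not_mem_nil, or_false] at hU
        rcases hU with hU | hU <;> subst hU
        · exact const_mem z vpat a
        · exact const_mem z vpat b
      · show catListO rowCat [some _, some _] = some (v4 a b)
        have : catListO rowCat
            [some (constA a 2 1 (by omega) one_pos), some (constA b 2 1 (by omega) one_pos)] =
            rowCat (constA a 2 1 (by omega) one_pos) (constA b 2 1 (by omega) one_pos) := rfl
        rw [this]
        exact rowCat_const2 a b
    have h4γ := (Set.ext_iff.mp heq _).mp h4M
    obtain ⟨U, hU⟩ := mem_two_one_same z γ hr2 hc1 hyz _ h4γ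
    have hd4 := Arr.rowCat_dims hU
    have h44 : (v4 a b).rows = 4 := rfl
    have h41 : (v4 a b).cols = 1 := rfl
    have hUr : U.rows = 2 := by omega
    have hUc : U.cols = 1 := by omega
    have e1 := Arr.rowCat_entry_left hU (i := 1) (j := 0)
      (by rw [h44]; omega) (by rw [h41]; omega) (by omega) (by omega)
    have e3 := Arr.rowCat_entry_right hU (i := 3) (j := 0)
      (by rw [h44]; omega) (by rw [h41]; omega) (by omega) (by omega) (by omega)
    have ha : (v4 a b).entry ⟨1, by rw [h44]; omega⟩ ⟨0, by rw [h41]; omega⟩ = a := by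
      show (if (1 : ℕ) < 2 then a else b) = a
      norm_num
    have hb : (v4 a b).entry ⟨3, by rw [h44]; omega⟩ ⟨0, by rw [h41]; omega⟩ = b := by
      show (if (3 : ℕ) < 2 then a else b) = b
      norm_num
    have hsame : U.entry ⟨3 - U.rows, by omega⟩ ⟨0, by omega⟩ =
        U.entry ⟨1, by omega⟩ ⟨0, by omega⟩ :=
      Arr.entry_congr (show 3 - U.rows = 1 by omega) rfl
    apply hab
    rw [← ha, e1, ← hsame, ← e3, hb]
  · -- the two pattern variables of γ differ: vab is in L(γ) but not in the star
    have hvabγ : Arr.vab a b ∈ langOf σ z γ := vab_mem z γ hr2 hc1 a b hyz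
    have hvabM := (Set.ext_iff.mp heq _).mpr hvabγ
    obtain ⟨U, hU⟩ := (rowStar_vpat_struct hvabM).2 rfl
    have hd2 := Arr.rowCat_dims hU
    have hv2 : (Arr.vab a b).rows = 2 := rfl
    have hv1 : (Arr.vab a b).cols = 1 := rfl
    have hUr : U.rows = 1 := by omega
    have e0 := Arr.rowCat_entry_left hU (i := 0) (j := 0)
      (by rw [hv2]; omega) (by rw [hv1]; omega) (by omega) (by omega)
    have e1 := Arr.rowCat_entry_right hU (i := 1) (j := 0)
      (by rw [hv2]; omega) (by rw [hv1]; omega) (by omega) (by omega) (by omega)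
    have ha : (Arr.vab a b).entry ⟨0, by rw [hv2]; omega⟩ ⟨0, by rw [hv1]; omega⟩ = a := by
      show (if (0 : ℕ) < 1 then a else b) = a
      norm_num
    have hb : (Arr.vab a b).entry ⟨1, by rw [hv2]; omega⟩ ⟨0, by rw [hv1]; omega⟩ = b := by
      show (if (1 : ℕ) < 1 then a else b) = b
      norm_num
    have hsame : U.entry ⟨1 - U.rows, by omega⟩ ⟨0, by omega⟩ =
        U.entry ⟨0, by omega⟩ ⟨0, by omega⟩ :=
      Arr.entry_congr (show 1 - U.rows = 0 by omega) rfl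
    apply hab
    rw [← ha, e0, ← hsame, ← e1, hb]

theorem col_half {σ : Type} (a b : σ) (hab : a ≠ b) (z : Mode) (γ : Arr ℕ) :
    colStar (langOf σ z hpat) ≠ langOf σ z γ := by
  intro heq
  have hVaL : constA a hpat.rows hpat.cols hpat.rows_pos hpat.cols_pos ∈ langOf σ z hpat :=
    const_mem z hpat a
  have hVaM : constA a hpat.rows hpat.cols hpat.rows_pos hpat.cols_pos ∈
      colStar (langOf σ z hpat) := by
    refine ⟨[_], by simp, ?_, rfl⟩
    intro U hU
    simp only [List.mem_singleton] at hU
    subst hU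
    exact hVaL
  have hVaγ := (Set.ext_iff.mp heq _).mp hVaM
  have hd := langOf_dims z γ _ hVaγ
  have hVr : (constA a hpat.rows hpat.cols hpat.rows_pos hpat.cols_pos).rows = 1 := rfl
  have hVc : (constA a hpat.rows hpat.cols hpat.rows_pos hpat.cols_pos).cols = 2 := rfl
  have hr1 : γ.rows = 1 := by have := γ.rows_pos; omega
  have hγc2 : γ.cols ≤ 2 := by omega
  have hcγ : constA a γ.rows γ.cols γ.rows_pos γ.cols_pos ∈ langOf σ z γ := const_mem z γ a
  have hcM := (Set.ext_iff.mp heq _).mpr hcγ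
  have heven : Even γ.cols := by
    have h := (colStar_hpat_struct hcM).1
    exact h
  have hc2 : γ.cols = 2 := by
    obtain ⟨k, hk⟩ := heven
    have := γ.cols_pos
    omega
  by_cases hyz : γ.entry ⟨0, by omega⟩ ⟨0, by omega⟩ = γ.entry ⟨0, by omega⟩ ⟨1, by omega⟩
  · have h4M : h4 a b ∈ colStar (langOf σ z hpat) := by
      refine ⟨[constA a 1 2 one_pos (by omega), constA b 1 2 one_pos (by omega)],
        by simp, ?_, ?_⟩
      · intro U hU
        simp only [List.mem_cons, List.mem_singleton, List.not_mem_nil, or_false] at hU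
        rcases hU with hU | hU <;> subst hU
        · exact const_mem z hpat a
        · exact const_mem z hpat b
      · show catListO colCat [some _, some _] = some (h4 a b)
        have : catListO colCat
            [some (constA a 1 2 one_pos (by omega)), some (constA b 1 2 one_pos (by omega))] =
            colCat (constA a 1 2 one_pos (by omega)) (constA b 1 2 one_pos (by omega)) := rfl
        rw [this]
        exact colCat_const2 a b
    have h4γ := (Set.ext_iff.mp heq _).mp h4M
    obtain ⟨U, hU⟩ := mem_one_two_same z γ hr1 hc2 hyz _ h4γ
    have hd4 := Arr.colCat_dims hU
    have h44 : (h4 a b).cols = 4 := rfl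
    have h41 : (h4 a b).rows = 1 := rfl
    have hUc : U.cols = 2 := by omega
    have hUr : U.rows = 1 := by omega
    have e1 := Arr.colCat_entry_left hU (i := 0) (j := 1)
      (by rw [h41]; omega) (by rw [h44]; omega) (by omega) (by omega)
    have e3 := Arr.colCat_entry_right hU (i := 0) (j := 3)
      (by rw [h41]; omega) (by rw [h44]; omega) (by omega) (by omega) (by omega)
    have ha : (h4 a b).entry ⟨0, by rw [h41]; omega⟩ ⟨1, by rw [h44]; omega⟩ = a := by
      show (if (1 : ℕ) < 2 then a else b) = a
      norm_num
    have hb : (h4 a b).entry ⟨0, by rw [h41]; omega⟩ ⟨3, by rw [h44]; omega⟩ = b := by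
      show (if (3 : ℕ) < 2 then a else b) = b
      norm_num
    have hsame : U.entry ⟨0, by omega⟩ ⟨3 - U.cols, by omega⟩ =
        U.entry ⟨0, by omega⟩ ⟨1, by omega⟩ :=
      Arr.entry_congr rfl (show 3 - U.cols = 1 by omega)
    apply hab
    rw [← ha, e1, ← hsame, ← e3, hb]
  · have hvabγ : Arr.hab a b ∈ langOf σ z γ := hab_mem z γ hr1 hc2 a b hyz
    have hvabM := (Set.ext_iff.mp heq _).mpr hvabγ
    obtain ⟨U, hU⟩ := (colStar_hpat_struct hvabM).2 rfl
    have hd2 := Arr.colCat_dims hU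
    have hv2 : (Arr.hab a b).cols = 2 := rfl
    have hv1 : (Arr.hab a b).rows = 1 := rfl
    have hUc : U.cols = 1 := by omega
    have e0 := Arr.colCat_entry_left hU (i := 0) (j := 0)
      (by rw [hv1]; omega) (by rw [hv2]; omega) (by omega) (by omega)
    have e1 := Arr.colCat_entry_right hU (i := 0) (j := 1)
      (by rw [hv1]; omega) (by rw [hv2]; omega) (by omega) (by omega) (by omega)
    have ha : (Arr.hab a b).entry ⟨0, by rw [hv1]; omega⟩ ⟨0, by rw [hv2]; omega⟩ = a := by
      show (if (0 : ℕ) < 1 then a else b) = a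
      norm_num
    have hb : (Arr.hab a b).entry ⟨0, by rw [hv1]; omega⟩ ⟨1, by rw [hv2]; omega⟩ = b := by
      show (if (1 : ℕ) < 1 then a else b) = b
      norm_num
    have hsame : U.entry ⟨0, by omega⟩ ⟨1 - U.cols, by omega⟩ =
        U.entry ⟨0, by omega⟩ ⟨0, by omega⟩ :=
      Arr.entry_congr rfl (show 1 - U.cols = 0 by omega)
    apply hab
    rw [← ha, e0, ← hsame, ← e1, hb]

/-- over a non-unary alphabet, none of the array pattern
language classes is closed under row or under column concatenation closure. -/
theorem stmt18 {σ : Type} [Fintype σ] (hcard : 2 ≤ Fintype.card σ) (z : Mode) :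
    ∃ α α' : Arr ℕ,
      (∀ γ : Arr ℕ, rowStar (langOf σ z α) ≠ langOf σ z γ) ∧
      (∀ γ : Arr ℕ, colStar (langOf σ z α') ≠ langOf σ z γ) := by
  obtain ⟨a, b, hab⟩ := Fintype.exists_pair_of_one_lt_card (α := σ) (by omega)
  exact ⟨vpat, hpat, fun γ => row_half a b hab z γ, fun γ => col_half a b hab z γ⟩
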